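/- Let G be a tree, let T_1 and T_2 be search trees on G, and let U_1,...,U_k ⊆ V(G) be pairwise disjoint sets such that each G[U_i] is connected. Then the rotation distance satisfies d(T_1, T_2) ≥ Σ_{i=1}^{k} d(T_1[U_i], T_2[U_i]), where d(T_1[U_i], T_2[U_i]) denotes the rotation distance between the projections, taken among search trees on G[U_i]. -/

import Mathlib

/-- A rooted tree (or the empty tree) on a subset `supp` of the vertex type `V`,
represented by parent pointers. -/
structure RTree (V : Type) where
  supp : Finset V
  parent : V → Option V
  parent_eq_none : ∀ v ∉ supp, parent v = none
  mem_of_parent : ∀ {v w : V}, parent v = some w → v ∈ supp ∧ w ∈ supp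
  root_unique : ∀ v ∈ supp, ∀ w ∈ supp, parent v = none → parent w = none → v = w
  reaches_root : ∀ v ∈ supp, ∃ r ∈ supp, parent r = none ∧
    Relation.ReflTransGen (fun a b => parent a = some b) v r

namespace RTree

variable {V : Type}

/-- `T.Anc a v` : `a` is an ancestor of `v` in `T` (possibly `a = v`). -/
def Anc (T : RTree V) (a v : V) : Prop :=
  Relation.ReflTransGen (fun x y => T.parent x = some y) v a

/-- `a` is a strict ancestor of `v`. -/
def StrictAnc (T : RTree V) (a v : V) : Prop := a ≠ v ∧ T.Anc a v

/-- The set of vertices of the subtree rooted at `a` (the descendants of `a`). -/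
def descSet (T : RTree V) (a : V) : Set V := {v | T.Anc a v}

/-- The depth of a node: the number of nodes on the path from the root to it
(the root has depth 1). -/
noncomputable def depth (T : RTree V) (v : V) : ℕ := Set.ncard {a | T.Anc a v}

def IsRoot (T : RTree V) (r : V) : Prop := r ∈ T.supp ∧ T.parent r = none

end RTree

/-- The restriction of a graph to a set of vertices (keeping the ambient vertex type). -/
def restrictG {V : Type} (G : SimpleGraph V) (U : Set V) : SimpleGraph V where
  Adj a b := G.Adj a b ∧ a ∈ U ∧ b ∈ U
  symm := ⟨fun a b ⟨h, ha, hb⟩ => ⟨h.symm, hb, ha⟩⟩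
  loopless := ⟨fun a ⟨h, _, _⟩ => G.loopless.irrefl a h⟩

/-- `T` is a search tree on the induced subgraph `G[U]`: its nodes are the vertices of `U`,
the subtree of every node induces a connected subgraph, and every edge of `G[U]` joins
two comparable nodes of `T`. -/
def IsSTGOn {V : Type} (G : SimpleGraph V) (U : Finset V) (T : RTree V) : Prop :=
  T.supp = U ∧
  (∀ v ∈ U, ((restrictG G ↑U).induce (T.descSet v)).Connected) ∧
  (∀ u v : V, u ∈ U → v ∈ U → G.Adj u v → T.Anc u v ∨ T.Anc v u)

/-- `T` is a search tree on the graph `G`. -/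
def IsSTG {V : Type} [Fintype V] (G : SimpleGraph V) (T : RTree V) : Prop :=
  IsSTGOn G Finset.univ T

/-- `T'` is obtained from `T` by rotating the edge `(p, c)` of `T`, where `p` is
the parent of `c`: `c` replaces `p` (becoming a child of `p`'s former parent, or the
root if `p` was the root), `p` becomes a child of `c`, `p` keeps its other children,
and each child `x` of `c` whose subtree contains a vertex of `G` adjacent to `p`
becomes a child of `p` (the other children of `c` stay children of `c`). -/
def IsRotationAt {V : Type} (G : SimpleGraph V) (T T' : RTree V) (p c : V) : Prop :=
  T.parent c = some p ∧
  T'.supp = T.supp ∧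
  T'.parent c = T.parent p ∧
  T'.parent p = some c ∧
  (∀ x : V, x ≠ p → T.parent x = some c →
    ((∃ u ∈ T.descSet x, G.Adj u p) → T'.parent x = some p) ∧
    (¬(∃ u ∈ T.descSet x, G.Adj u p) → T'.parent x = some c)) ∧
  (∀ x : V, x ≠ c → x ≠ p → T.parent x ≠ some c → T'.parent x = T.parent x)

/-- `T'` is obtained from `T` by a single rotation. -/
def IsRotation {V : Type} (G : SimpleGraph V) (T T' : RTree V) : Prop :=
  ∃ p c, IsRotationAt G T T' p c

/-- `T2` can be obtained from `T1` by exactly `k` rotations. -/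
def ReachesIn {V : Type} (G : SimpleGraph V) : ℕ → RTree V → RTree V → Prop
  | 0, T1, T2 => T1 = T2
  | k+1, T1, T2 => ∃ T', IsRotation G T1 T' ∧ ReachesIn G k T' T2

/-- Vertex type of the caterpillar `C(m_1, …, m_n)`: spine vertices `inl i` and
leg vertices `inr ⟨i, j⟩`. -/
abbrev CatV (n : ℕ) (m : Fin n → ℕ) : Type := Fin n ⊕ (Σ i : Fin n, Fin (m i))

/-- The caterpillar tree `C(m_1, …, m_n)`: the spine `s_1 - s_2 - ⋯ - s_n` is a path,
and leg `ℓ_{i,j}` is adjacent to `s_i`. -/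
def caterpillar (n : ℕ) (m : Fin n → ℕ) : SimpleGraph (CatV n m) where
  Adj x y :=
    match x, y with
    | Sum.inl i, Sum.inl j => i.val + 1 = j.val ∨ j.val + 1 = i.val
    | Sum.inl i, Sum.inr l => l.1 = i
    | Sum.inr l, Sum.inl i => l.1 = i
    | Sum.inr _, Sum.inr _ => False
  symm := ⟨by rintro (i | l) (j | l') h <;> simp_all <;> tauto⟩
  loopless := ⟨by rintro (i | l) h <;> simp_all⟩

/-- The (base 2) Shannon entropy `H(m_1, …, m_n) = ∑_{i : m_i > 0} (m_i/m) log (m/m_i)`. -/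
noncomputable def shannonH {n : ℕ} (m : Fin n → ℕ) : ℝ :=
  ∑ i, if 0 < m i then
    ((m i : ℝ) / (∑ j, (m j : ℝ))) * Real.logb 2 ((∑ j, (m j : ℝ)) / (m i : ℝ))
  else 0

/-- The parent function of the search tree `A(S, π)` on the caterpillar: the legs form a
path at the top of the tree, ordered bottom-to-top according to `π`, and the spine nodes
hang below, arranged according to the BST `S`. -/
def AParent {n : ℕ} {m : Fin n → ℕ} (S : RTree (Fin n))
    (π : Fin (∑ i, m i) ≃ (Σ i : Fin n, Fin (m i))) :
    CatV n m → Option (CatV n m) :=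
  fun x => match x with
  | Sum.inl i =>
      match S.parent i with
      | some j => some (Sum.inl j)
      | none => if h : 0 < ∑ i, m i then some (Sum.inr (π ⟨0, h⟩)) else none
  | Sum.inr l =>
      if h : (π.symm l).val + 1 < ∑ i, m i then
        some (Sum.inr (π ⟨(π.symm l).val + 1, h⟩))
      else none

/-- `T = A(S, π)`. -/
def IsA {n : ℕ} {m : Fin n → ℕ} (S : RTree (Fin n))
    (π : Fin (∑ i, m i) ≃ (Σ i : Fin n, Fin (m i))) (T : RTree (CatV n m)) : Prop :=
  T.supp = Finset.univ ∧ T.parent = AParent S π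

/-- The parent function of the search tree `B(S)` on the caterpillar: every leg `ℓ_{i,j}`
is a (childless) child of `s_i`, and the spine nodes are arranged according to `S`. -/
def BParent {n : ℕ} {m : Fin n → ℕ} (S : RTree (Fin n)) :
    CatV n m → Option (CatV n m) :=
  fun x => match x with
  | Sum.inl i => (S.parent i).map Sum.inl
  | Sum.inr l => some (Sum.inl l.1)

/-- `T = B(S)`. -/
def IsB {n : ℕ} {m : Fin n → ℕ} (S : RTree (Fin n)) (T : RTree (CatV n m)) : Prop :=
  T.supp = Finset.univ ∧ T.parent = BParent S

/-- `σ(π)`: the sequence of spine indices obtained from the leg ordering `π` by replacing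
each leg `ℓ_{i,j}` with `i`. -/
def sigmaOf {n : ℕ} {m : Fin n → ℕ}
    (π : Fin (∑ i, m i) ≃ (Σ i : Fin n, Fin (m i))) : List (Fin n) :=
  List.ofFn (fun j => (π j).1)

/-- Every leg node of `T` is bound, i.e. no leg node has a child. -/
def noFreeLegs {n : ℕ} {m : Fin n → ℕ} (T : RTree (CatV n m)) : Prop :=
  ∀ (x : CatV n m) (l : Σ i : Fin n, Fin (m i)), T.parent x ≠ some (Sum.inr l)

open Classical in
/-- The number of adjacent pairs in a list satisfying `P`. -/
noncomputable def pairAlt {α : Type} (P : α → α → Prop) : List α → ℕ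
  | [] => 0
  | [_] => 0
  | a :: b :: t => (if P a b then 1 else 0) + pairAlt P (b :: t)

open Classical in
/-- Wilber's quantity `λ(S, u, σ)`: 0 if `u` has at most one child; otherwise the number
of adjacent pairs in the restriction of `σ` to the subtree of `u` that do not both lie in
the subtree of one child of `u` and are not both equal to `u`. -/
noncomputable def wilberLam {n : ℕ} (S : RTree (Fin n)) (u : Fin n) (σ : List (Fin n)) : ℕ :=
  if (∃ v w : Fin n, v ≠ w ∧ S.parent v = some u ∧ S.parent w = some u) then
    pairAlt (fun x y =>
      ¬((x = u ∧ y = u) ∨ ∃ ch, S.parent ch = some u ∧ S.Anc ch x ∧ S.Anc ch y))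
      (σ.filter (fun x => decide (S.Anc u x)))
  else 0

/-- `λ'(S, u, σ) = λ(S, u, σ)` plus the number of occurrences of `u` in `σ`. -/
noncomputable def wilberLam' {n : ℕ} (S : RTree (Fin n)) (u : Fin n)
    (σ : List (Fin n)) : ℕ :=
  wilberLam S u σ + σ.count u

/-- Wilber's first lower bound `Λ'(S, σ) = ∑_u λ'(S, u, σ)`. -/
noncomputable def wilberL' {n : ℕ} (S : RTree (Fin n)) (σ : List (Fin n)) : ℕ :=
  ∑ u : Fin n, wilberLam' S u σ

/-- `P` is the projection `T[U]` of `T` onto `U`: its nodes are the nodes of `T` in `U`,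
and the parent of `u` in `P` is the nearest strict ancestor of `u` in `T` that lies
in `U` (which is exactly the result of pruning the vertices outside `U` one by one). -/
def IsProjOn {V : Type} [DecidableEq V] (T : RTree V) (U : Finset V) (P : RTree V) : Prop :=
  P.supp = T.supp ∩ U ∧
  ∀ u w : V, P.parent u = some w ↔
    (u ∈ U ∧ w ∈ U ∧ T.StrictAnc w u ∧ ∀ z ∈ U, T.StrictAnc z u → T.Anc z w)

/-- `P` is obtained from `T` by pruning the vertex `v`. -/
def IsPruneOf {V : Type} [DecidableEq V] (T : RTree V) (v : V) (P : RTree V) : Prop :=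
  IsProjOn T (T.supp.erase v) P

/-- `PruneSeq T l P`: `P` is obtained from `T` by successively pruning the
vertices in the list `l`, in order. -/
def PruneSeq {V : Type} [DecidableEq V] : RTree V → List V → RTree V → Prop
  | T, [], P => P = T
  | T, v :: rest, P => ∃ P', IsPruneOf T v P' ∧ PruneSeq P' rest P

/-- The number of alternations (edges whose endpoints get different colors under `f`)
on the path from the root to `z`. -/
noncomputable def altAt {V K : Type} (f : V → K) (T : RTree V) (z : V) : ℕ :=
  Set.ncard {x | T.Anc x z ∧ ∃ y, T.parent x = some y ∧ f x ≠ f y}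

/-- The alternation number of `T` w.r.t. the coloring `f`: the maximum number of
alternations on a root-to-node path. -/
noncomputable def altNum {V K : Type} (f : V → K) (T : RTree V) : ℕ :=
  T.supp.sup (fun z => altAt f T z)



namespace RTree

variable {V : Type} {T : RTree V} {a b v w x y : V}

theorem ext' {T T' : RTree V} (hs : T.supp = T'.supp) (hp : T.parent = T'.parent) :
    T = T' := by
  cases T; cases T'; simp_all

theorem anc_refl (T : RTree V) (a : V) : T.Anc a a := Relation.ReflTransGen.refl

theorem anc_of_parent (h : T.parent v = some a) : T.Anc a v :=
  Relation.ReflTransGen.single h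

theorem Anc.trans (h1 : T.Anc b v) (h2 : T.Anc a b) : T.Anc a v :=
  Relation.ReflTransGen.trans h1 h2

theorem anc_cases (h : T.Anc a v) : a = v ∨ ∃ w, T.parent v = some w ∧ T.Anc a w := by
  rcases Relation.ReflTransGen.cases_head h with h | ⟨w, hw, h⟩
  · exact Or.inl h.symm
  · exact Or.inr ⟨w, hw, h⟩

private theorem rtg_total (h1 : Relation.ReflTransGen (fun x y => T.parent x = some y) v a)
    (h2 : Relation.ReflTransGen (fun x y => T.parent x = some y) v b) :
    Relation.ReflTransGen (fun x y => T.parent x = some y) a b ∨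
    Relation.ReflTransGen (fun x y => T.parent x = some y) b a := by
  revert h2
  induction h1 using Relation.ReflTransGen.head_induction_on with
  | refl => intro h2; left; exact h2
  | head hstep htail ih =>
    intro h2
    rename_i s t
    rcases Relation.ReflTransGen.cases_head h2 with h | ⟨w, hw, h⟩
    · subst h; right; exact Relation.ReflTransGen.head hstep htail
    · rw [hstep] at hw; cases Option.some.inj hw; exact ih h

theorem anc_total (h1 : T.Anc a v) (h2 : T.Anc b v) : T.Anc a b ∨ T.Anc b a :=
  (rtg_total h2 h1).imp id id

/-- `v` lies on a parent-cycle. -/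
def Loops (T : RTree V) (v : V) : Prop := ∃ w, T.parent v = some w ∧ T.Anc v w

private theorem loops_propagate
    (hxr : Relation.ReflTransGen (fun a b => T.parent a = some b) x v) :
    T.Loops x → T.Loops v := by
  induction hxr using Relation.ReflTransGen.head_induction_on with
  | refl => exact id
  | head hstep htail ih =>
    rename_i s t
    intro hs
    obtain ⟨w, hw, hws⟩ := hs
    rw [hstep] at hw; cases Option.some.inj hw
    apply ih
    rcases Relation.ReflTransGen.cases_head hws with h | ⟨u, hu, h⟩
    · exact h ▸ ⟨t, h ▸ hstep, h ▸ hws⟩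
    · exact ⟨u, hu, Relation.ReflTransGen.trans h (Relation.ReflTransGen.single hstep)⟩

theorem not_loops (T : RTree V) (v : V) : ¬ T.Loops v := by
  intro hL
  by_cases hv : v ∈ T.supp
  · obtain ⟨r, _, hr, hvr⟩ := T.reaches_root v hv
    obtain ⟨w, hw, _⟩ := loops_propagate hvr hL
    rw [hr] at hw; exact nomatch hw
  · obtain ⟨w, hw, _⟩ := hL
    rw [T.parent_eq_none v hv] at hw; exact nomatch hw

theorem anc_antisymm (h1 : T.Anc a v) (h2 : T.Anc v a) : a = v := by
  by_contra hne
  rcases Relation.ReflTransGen.cases_head h1 with h | ⟨w, hw, h⟩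
  · exact hne h.symm
  · exact T.not_loops v ⟨w, hw, Relation.ReflTransGen.trans h h2⟩

theorem mem_of_anc (h : T.Anc a v) (hv : v ∈ T.supp) : a ∈ T.supp := by
  unfold Anc at h
  induction h with
  | refl => exact hv
  | @tail b c hb hstep ih => exact (T.mem_of_parent hstep).2

theorem strictAnc_of_parent (h : T.parent v = some w) : T.StrictAnc w v := by
  refine ⟨?_, anc_of_parent h⟩
  rintro rfl
  exact T.not_loops _ ⟨_, h, anc_refl T _⟩

theorem parent_ne_self (h : T.parent v = some w) : v ≠ w :=
  fun he => (strictAnc_of_parent h).1 he.symm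

theorem not_anc_of_parent (h : T.parent v = some w) : ¬ T.Anc v w := by
  intro hvw
  exact T.not_loops v ⟨w, h, hvw⟩

section Fin
variable [Fintype V]

theorem depth_mono (h : T.Anc a v) : T.depth a ≤ T.depth v := by
  apply Set.ncard_le_ncard _ (Set.toFinite _)
  intro z hz
  exact Anc.trans h hz

theorem depth_strict (h : T.StrictAnc a v) : T.depth a < T.depth v := by
  apply Set.ncard_lt_ncard _ (Set.toFinite _)
  constructor
  · intro z hz; exact Anc.trans h.2 hz
  · intro hsub
    have : T.Anc v a := hsub (anc_refl T v)
    exact h.1 (anc_antisymm h.2 this)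

theorem anc_of_depth_le (h1 : T.Anc a v) (h2 : T.Anc b v) (hd : T.depth a ≤ T.depth b) :
    T.Anc a b := by
  rcases anc_total h1 h2 with h | h
  · exact h
  · rcases eq_or_ne b a with rfl | hne
    · exact anc_refl T b
    · exact absurd (depth_strict ⟨hne, h⟩) (by omega)

end Fin

theorem exists_child_anc (h : T.Anc a v) (hne : a ≠ v) :
    ∃ x, T.parent x = some a ∧ T.Anc a x ∧ T.Anc x v := by
  unfold Anc at h
  revert hne
  induction h using Relation.ReflTransGen.head_induction_on with
  | refl => intro hne; exact absurd rfl hne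
  | head hstep htail ih =>
    rename_i s t
    intro _
    rcases eq_or_ne t a with rfl | hy
    · exact ⟨s, hstep, anc_of_parent hstep, anc_refl T s⟩
    · obtain ⟨z, hz1, hz2, hz3⟩ := ih hy.symm
      exact ⟨z, hz1, hz2, Anc.trans (Relation.ReflTransGen.single hstep) hz3⟩

theorem child_unique_on_chain (hx : T.parent x = some a) (hy : T.parent y = some a)
    (h1 : T.Anc x v) (h2 : T.Anc y v) : x = y := by
  have H : ∀ x y : V, T.parent x = some a → T.parent y = some a →
      T.Anc x y → x = y := by
    intro x y hx hy hxy
    rcases anc_cases hxy with h | ⟨w, hw, h⟩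
    · exact h
    · rw [hy] at hw; cases Option.some.inj hw
      have hxa : x = a := anc_antisymm h (anc_of_parent hx)
      subst hxa
      exact absurd ⟨x, hx, anc_refl T x⟩ (T.not_loops x)
  rcases anc_total h1 h2 with h | h
  · exact H x y hx hy h
  · exact (H y x hy hx h).symm

end RTree


open SimpleGraph

variable {V : Type} {G : SimpleGraph V} {s t : Set V} {u v : V}

/-- Reachability within a vertex set. -/
def ReachIn (G : SimpleGraph V) (s : Set V) (u v : V) : Prop :=
  Relation.ReflTransGen (fun a b => G.Adj a b ∧ a ∈ s ∧ b ∈ s) u v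

theorem ReachIn.mono (hst : s ⊆ t) (h : ReachIn G s u v) : ReachIn G t u v := by
  induction h with
  | refl => exact Relation.ReflTransGen.refl
  | tail _ hstep ih =>
      exact Relation.ReflTransGen.tail ih ⟨hstep.1, hst hstep.2.1, hst hstep.2.2⟩

theorem ReachIn.trans {w : V} (h1 : ReachIn G s u v) (h2 : ReachIn G s v w) :
    ReachIn G s u w := Relation.ReflTransGen.trans h1 h2

theorem reachIn_of_walk : ∀ {a b : ↥s} (_ : (G.induce s).Walk a b), ReachIn G s a b := by
  intro a b w
  induction w with
  | nil => exact Relation.ReflTransGen.refl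
  | @cons x y z h _ ih =>
      exact Relation.ReflTransGen.head ⟨h, x.2, y.2⟩ ih

private theorem reachable_of_reachIn' (h : ReachIn G s u v) :
    ∀ (hu : u ∈ s) (hv : v ∈ s), (G.induce s).Reachable ⟨u, hu⟩ ⟨v, hv⟩ := by
  induction h with
  | refl => intro _ _; rfl
  | @tail b c hb hstep ih =>
      intro hu hv
      exact (ih hu hstep.2.1).trans (SimpleGraph.Adj.reachable (by exact hstep.1))

theorem connected_induce_iff' :
    (G.induce s).Connected ↔ s.Nonempty ∧ ∀ u ∈ s, ∀ v ∈ s, ReachIn G s u v := by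
  constructor
  · intro h
    refine ⟨⟨(Classical.choice h.nonempty).1, (Classical.choice h.nonempty).2⟩, ?_⟩
    intro u hu v hv
    obtain ⟨w⟩ := h.preconnected ⟨u, hu⟩ ⟨v, hv⟩
    exact reachIn_of_walk w
  · rintro ⟨⟨x, hx⟩, h⟩
    haveI : Nonempty ↥s := ⟨⟨x, hx⟩⟩
    refine ⟨fun a b => ?_⟩
    exact reachable_of_reachIn' (h a a.2 b b.2) a.2 b.2

theorem reachIn_walk (h : ReachIn G s u v) (hu : u ∈ s) :
    ∃ w : G.Walk u v, ∀ x ∈ w.support, x ∈ s := by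
  induction h with
  | refl => exact ⟨SimpleGraph.Walk.nil, by simp [hu]⟩
  | @tail b c hb hstep ih =>
      obtain ⟨w, hw⟩ := ih
      refine ⟨w.concat hstep.1, ?_⟩
      intro x hx
      rw [SimpleGraph.Walk.support_concat, List.mem_append] at hx
      rcases hx with h | h
      · exact hw x h
      · simp at h; subst h; exact hstep.2.2

theorem exists_boundary {u v : V} (w : G.Walk u v) (hu : u ∈ t) (hv : v ∉ t) :
    ∃ d e, G.Adj d e ∧ d ∈ t ∧ e ∉ t ∧ d ∈ w.support ∧ e ∈ w.support := by
  revert hu hv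
  induction w with
  | nil => intro hu hv; exact absurd hu hv
  | @cons x y z h w ih =>
      intro hu hv
      by_cases hy : y ∈ t
      · obtain ⟨d, e, h1, h2, h3, h4, h5⟩ := ih hy hv
        exact ⟨d, e, h1, h2, h3, by simp [h4], by simp [h5]⟩
      · exact ⟨x, y, h, hu, hy, by simp, by simp⟩

/-- In an acyclic graph, if `u,v` are joined inside `s` and inside `t`, then they are
joined by a path inside `s ∩ t`. -/
theorem exists_common_walk [DecidableEq V] (hG : G.IsAcyclic) (h1 : ReachIn G s u v) (h2 : ReachIn G t u v)
    (hus : u ∈ s) (hut : u ∈ t) :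
    ∃ w : G.Walk u v, w.IsPath ∧ (∀ x ∈ w.support, x ∈ s) ∧ ∀ x ∈ w.support, x ∈ t := by
  obtain ⟨w1, hw1⟩ := reachIn_walk h1 hus
  obtain ⟨w2, hw2⟩ := reachIn_walk h2 hut
  have he : w1.toPath = w2.toPath := hG.path_unique _ _
  refine ⟨w1.toPath.val, w1.toPath.prop, ?_, ?_⟩
  · intro x hx; exact hw1 x (SimpleGraph.Walk.support_toPath_subset w1 hx)
  · intro x hx; rw [he] at hx
    exact hw2 x (SimpleGraph.Walk.support_toPath_subset w2 hx)

theorem restrictG_univ [Fintype V] (G : SimpleGraph V) :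
    restrictG G (↑(Finset.univ : Finset V)) = G := by
  ext a b
  simp [restrictG]

theorem reachIn_restrict_iff {W : Set V} (hsW : s ⊆ W) :
    ReachIn (restrictG G W) s u v ↔ ReachIn G s u v := by
  constructor
  · intro h
    induction h with
    | refl => exact Relation.ReflTransGen.refl
    | tail _ hstep ih =>
        exact Relation.ReflTransGen.tail ih ⟨hstep.1.1, hstep.2.1, hstep.2.2⟩
  · intro h
    induction h with
    | refl => exact Relation.ReflTransGen.refl
    | tail _ hstep ih =>
        exact Relation.ReflTransGen.tail ih
          ⟨⟨hstep.1, hsW hstep.2.1, hsW hstep.2.2⟩, hstep.2.1, hstep.2.2⟩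


open RTree

variable {V : Type} [Fintype V] [DecidableEq V] {G : SimpleGraph V} {T P : RTree V}
  {U : Finset V} {a b u v w z : V}

theorem stg_supp (h : IsSTG G T) : T.supp = Finset.univ := h.1

theorem stg_mem (h : IsSTG G T) (v : V) : v ∈ T.supp := by rw [stg_supp h]; exact Finset.mem_univ v

theorem stg_comp (h : IsSTG G T) (ha : G.Adj u v) : T.Anc u v ∨ T.Anc v u :=
  h.2.2 u v (Finset.mem_univ u) (Finset.mem_univ v) ha

theorem stg_reachIn (h : IsSTG G T) {u1 u2 : V} (hu1 : u1 ∈ T.descSet v)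
    (hu2 : u2 ∈ T.descSet v) : ReachIn G (T.descSet v) u1 u2 := by
  have hc := h.2.1 v (Finset.mem_univ v)
  rw [restrictG_univ] at hc
  exact (connected_induce_iff'.1 hc).2 u1 hu1 u2 hu2

/-- The minimum-depth element of a connected set dominates it. -/
theorem exists_dominator (hT : IsSTG G T) (hU : (G.induce (↑U : Set V)).Connected) :
    ∃ z ∈ U, ∀ u ∈ U, T.Anc z u := by
  obtain ⟨hne, hreach⟩ := connected_induce_iff'.1 hU
  obtain ⟨z, hz, hmin⟩ := U.exists_min_image T.depth ⟨hne.choose, hne.choose_spec⟩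
  refine ⟨z, hz, ?_⟩
  have key : ∀ b : V, ReachIn G ↑U z b → T.Anc z b := by
    intro b h
    induction h with
    | refl => exact anc_refl T z
    | @tail x y _ hstep ih =>
        rcases stg_comp hT hstep.1 with h | h
        · exact Anc.trans h ih
        · rcases anc_total ih h with h2 | h2
          · exact h2
          · rcases eq_or_ne y z with rfl | hne2
            · exact anc_refl T y
            · exact absurd (depth_strict ⟨hne2, h2⟩)
                (by have := hmin y hstep.2.2; omega)
  intro u hu
  exact key u (hreach z hz u hu)

/-- If `u` has some strict ancestor in `U`, it has a nearest one. -/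
theorem nearest_spec (hz : z ∈ U) (hzu : T.StrictAnc z u) :
    ∃ w, w ∈ U ∧ T.StrictAnc w u ∧ ∀ y ∈ U, T.StrictAnc y u → T.Anc y w := by
  obtain ⟨w, hw, hmax⟩ := Set.exists_max_image {w | w ∈ U ∧ T.StrictAnc w u} T.depth
    (Set.toFinite _) ⟨z, hz, hzu⟩
  refine ⟨w, hw.1, hw.2, ?_⟩
  intro y hy hyu
  exact anc_of_depth_le hyu.2 hw.2.2 (hmax y ⟨hy, hyu⟩)

open Classical in
/-- The nearest-`U`-ancestor parent function. -/
noncomputable def projParent (T : RTree V) (U : Finset V) : V → Option V := fun u =>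
  if h : u ∈ U ∧ ∃ w, w ∈ U ∧ T.StrictAnc w u ∧ ∀ y ∈ U, T.StrictAnc y u → T.Anc y w
  then some h.2.choose else none

theorem projParent_eq_some_iff :
    projParent T U u = some w ↔
    (u ∈ U ∧ w ∈ U ∧ T.StrictAnc w u ∧ ∀ z ∈ U, T.StrictAnc z u → T.Anc z w) := by
  unfold projParent
  by_cases hcond : u ∈ U ∧ ∃ w, w ∈ U ∧ T.StrictAnc w u ∧
      ∀ y ∈ U, T.StrictAnc y u → T.Anc y w
  · rw [dif_pos hcond]
    obtain ⟨h1, h2, h3⟩ := hcond.2.choose_spec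
    constructor
    · intro h
      cases Option.some.inj h
      exact ⟨hcond.1, h1, h2, h3⟩
    · rintro ⟨hu, hw, hsw, hall⟩
      congr 1
      exact anc_antisymm (hall _ h1 h2) (h3 w hw hsw)
  · rw [dif_neg hcond]
    constructor
    · intro h; exact nomatch h
    · rintro ⟨hu, hw, hsw, hall⟩
      exact absurd ⟨hu, w, hw, hsw, hall⟩ hcond

theorem projParent_eq_none (hu : u ∉ U) : projParent T U u = none := by
  unfold projParent
  rw [dif_neg]; intro h; exact hu h.1

/-- The projection of a search tree onto a connected vertex set, as an `RTree`. -/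
noncomputable def projRT (T : RTree V) (U : Finset V) (hT : IsSTG G T)
    (hU : (G.induce (↑U : Set V)).Connected) : RTree V where
  supp := T.supp ∩ U
  parent := projParent T U
  parent_eq_none := by
    intro v hv
    apply projParent_eq_none
    intro hvU
    exact hv (Finset.mem_inter.2 ⟨stg_mem hT v, hvU⟩)
  mem_of_parent := by
    intro v w h
    obtain ⟨hv, hw, _, _⟩ := projParent_eq_some_iff.1 h
    exact ⟨Finset.mem_inter.2 ⟨stg_mem hT v, hv⟩, Finset.mem_inter.2 ⟨stg_mem hT w, hw⟩⟩
  root_unique := by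
    intro v hv w hw hv0 hw0
    obtain ⟨z, hz, hdom⟩ := exists_dominator hT hU
    have hU0 : ∀ x, x ∈ T.supp ∩ U → projParent T U x = none → x = z := by
      intro x hx hx0
      by_contra hne
      have hzx : T.StrictAnc z x := ⟨fun h => hne h.symm, hdom x (Finset.mem_inter.1 hx).2⟩
      obtain ⟨w', hw1, hw2, hw3⟩ := nearest_spec hz hzx
      have := projParent_eq_some_iff.2 ⟨(Finset.mem_inter.1 hx).2, hw1, hw2, hw3⟩
      rw [hx0] at this; exact nomatch this
    rw [hU0 v hv hv0, hU0 w hw hw0]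
  reaches_root := by
    intro v hv
    obtain ⟨z, hz, hdom⟩ := exists_dominator hT hU
    have hz0 : projParent T U z = none := by
      unfold projParent
      rw [dif_neg]
      rintro ⟨_, w', hw1, hw2, _⟩
      exact hw2.1 (anc_antisymm hw2.2 (hdom w' hw1))
    refine ⟨z, Finset.mem_inter.2 ⟨stg_mem hT z, hz⟩, hz0, ?_⟩
    have key : ∀ n (x : V), x ∈ U → T.depth x ≤ n →
        Relation.ReflTransGen (fun a b => projParent T U a = some b) x z := by
      intro n
      induction n with
      | zero =>
          intro x hx hd
          rcases eq_or_ne x z with rfl | hne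
          · exact Relation.ReflTransGen.refl
          · exact absurd (depth_strict ⟨fun h => hne h.symm, hdom x hx⟩) (by omega)
      | succ n ih =>
          intro x hx hd
          rcases eq_or_ne x z with rfl | hne
          · exact Relation.ReflTransGen.refl
          · have hzx : T.StrictAnc z x := ⟨fun h => hne h.symm, hdom x hx⟩
            obtain ⟨w', hw1, hw2, hw3⟩ := nearest_spec hz hzx
            have hp := projParent_eq_some_iff.2 ⟨hx, hw1, hw2, hw3⟩
            have hdw : T.depth w' < T.depth x := depth_strict hw2
            exact Relation.ReflTransGen.head hp (ih w' hw1 (by omega))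
    exact key (T.depth v) v (Finset.mem_inter.1 hv).2 le_rfl

theorem projRT_isProjOn (hT : IsSTG G T) (hU : (G.induce (↑U : Set V)).Connected) :
    IsProjOn T U (projRT T U hT hU) :=
  ⟨rfl, fun u w => projParent_eq_some_iff⟩

theorem proj_exists (hT : IsSTG G T) (hU : (G.induce (↑U : Set V)).Connected) :
    ∃ P, IsProjOn T U P := ⟨projRT T U hT hU, projRT_isProjOn hT hU⟩

theorem proj_unique {P P' : RTree V} (h1 : IsProjOn T U P) (h2 : IsProjOn T U P') :
    P = P' := by
  apply RTree.ext' (h1.1.trans h2.1.symm)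
  funext u
  cases hP : P.parent u with
  | none =>
      cases hP' : P'.parent u with
      | none => rfl
      | some w =>
          have := (h1.2 u w).2 ((h2.2 u w).1 hP')
          rw [hP] at this; exact nomatch this
  | some w => exact ((h2.2 u w).2 ((h1.2 u w).1 hP)).symm ▸ rfl

theorem proj_parent_none (hP : IsProjOn T U P) (hu : u ∉ U) : P.parent u = none := by
  cases h : P.parent u with
  | none => rfl
  | some w => exact absurd ((hP.2 u w).1 h).1 hu

theorem proj_anc_anc (hP : IsProjOn T U P) (h : P.Anc a v) : T.Anc a v := by
  unfold RTree.Anc at h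
  induction h with
  | refl => exact anc_refl T _
  | @tail b c _ hstep ih => exact Anc.trans ih ((hP.2 b c).1 hstep).2.2.1.2

theorem proj_anc_memU (hP : IsProjOn T U P) (h : P.Anc a v) (hne : a ≠ v) :
    a ∈ U ∧ v ∈ U := by
  unfold RTree.Anc at h
  revert hne
  induction h using Relation.ReflTransGen.head_induction_on with
  | refl => intro hne; exact absurd rfl hne
  | head hstep htail ih =>
      rename_i s t
      intro _
      have hcond := (hP.2 s t).1 hstep
      rcases eq_or_ne a t with rfl | hne2
      · exact ⟨hcond.2.1, hcond.1⟩
      · exact ⟨(ih hne2).1, hcond.1⟩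

theorem proj_anc_of_anc (hT : IsSTG G T) (hP : IsProjOn T U P) (ha : a ∈ U) (hv : v ∈ U)
    (h : T.Anc a v) : P.Anc a v := by
  have key : ∀ n (x : V), x ∈ U → T.Anc a x → T.depth x ≤ n → P.Anc a x := by
    intro n
    induction n with
    | zero =>
        intro x hx hax hd
        rcases eq_or_ne a x with rfl | hne
        · exact anc_refl P a
        · exact absurd (depth_strict ⟨hne, hax⟩) (by omega)
    | succ n ih =>
        intro x hx hax hd
        rcases eq_or_ne a x with rfl | hne
        · exact anc_refl P a
        · obtain ⟨w', hw1, hw2, hw3⟩ := nearest_spec ha ⟨hne, hax⟩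
          have hp : P.parent x = some w' := (hP.2 x w').2 ⟨hx, hw1, hw2, hw3⟩
          have haw : T.Anc a w' := hw3 a ha ⟨hne, hax⟩
          have hdw : T.depth w' < T.depth x := depth_strict hw2
          exact Relation.ReflTransGen.head hp (ih w' hw1 haw (by omega))
  exact key (T.depth v) v hv h le_rfl

theorem proj_descSet (hT : IsSTG G T) (hP : IsProjOn T U P) (hx : u ∈ U) :
    P.descSet u = {v | v ∈ U ∧ T.Anc u v} := by
  ext v
  constructor
  · intro h
    rcases eq_or_ne u v with rfl | hne
    · exact ⟨hx, anc_refl T u⟩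
    · exact ⟨(proj_anc_memU hP h hne).2, proj_anc_anc hP h⟩
  · rintro ⟨hv, hanc⟩
    exact proj_anc_of_anc hT hP hx hv hanc


open RTree

variable {V : Type} [Fintype V] [DecidableEq V] {G : SimpleGraph V} {T T' : RTree V}
  {p c a v w : V}

theorem anc_iff_head {T : RTree V} {a v : V} :
    T.Anc a v ↔ a = v ∨ ∃ w, T.parent v = some w ∧ T.Anc a w := by
  constructor
  · exact anc_cases
  · rintro (rfl | ⟨w, hw, h⟩)
    · exact anc_refl T a
    · exact Relation.ReflTransGen.head hw h

theorem depth_pos (T : RTree V) (v : V) : 0 < T.depth v :=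
  (Set.ncard_pos (Set.toFinite _)).2 ⟨v, anc_refl T v⟩

/-- `x` is a child of `c` that gets moved below `p` by the rotation. -/
def Mv (G : SimpleGraph V) (T : RTree V) (p c x : V) : Prop :=
  x ≠ p ∧ T.parent x = some c ∧ ∃ u ∈ T.descSet x, G.Adj u p

/-- `v` loses `p` as an ancestor in the rotation. -/
def Lose (G : SimpleGraph V) (T : RTree V) (p c v : V) : Prop :=
  T.Anc c v ∧ ¬ ∃ x, Mv G T p c x ∧ T.Anc x v

/-- `v` gains `c` as an ancestor in the rotation. -/
def Gain (T : RTree V) (p c v : V) : Prop := T.Anc p v ∧ ¬ T.Anc c v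

section Helpers
variable (hpc : T.parent c = some p)

include hpc

theorem rot_c_ne_p : c ≠ p := parent_ne_self hpc

theorem rot_anc_p_c : T.Anc p c := anc_of_parent hpc

theorem rot_not_anc_c_p : ¬ T.Anc c p := not_anc_of_parent hpc

theorem anc_c_iff : T.Anc a c ↔ a = c ∨ T.Anc a p := by
  rw [anc_iff_head (v := c)]
  simp [hpc]

theorem lose_c : Lose G T p c c := by
  refine ⟨anc_refl T c, ?_⟩
  rintro ⟨x, ⟨hxp, hxc, _⟩, hxanc⟩
  have hcx : c = x := anc_antisymm (anc_of_parent hxc) hxanc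
  subst hcx
  rw [hpc] at hxc
  exact rot_c_ne_p hpc (Option.some.inj hxc).symm

theorem not_gain_c : ¬ Gain T p c c := fun h => h.2 (anc_refl T c)

theorem not_lose_p : ¬ Lose G T p c p := fun h => rot_not_anc_c_p hpc h.1

theorem gain_p : Gain T p c p := ⟨anc_refl T p, rot_not_anc_c_p hpc⟩

theorem F_p_iff : ((T.Anc a p ∧ ¬(a = p ∧ Lose G T p c p)) ∨ (a = c ∧ Gain T p c p)) ↔
    (T.Anc a p ∨ a = c) := by
  have h1 := not_lose_p (G := G) hpc
  have h2 := gain_p hpc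
  tauto

theorem F_c_iff : ((T.Anc a c ∧ ¬(a = p ∧ Lose G T p c c)) ∨ (a = c ∧ Gain T p c c)) ↔
    (T.Anc a c ∧ a ≠ p) := by
  have h1 := lose_c (G := G) hpc
  have h2 := not_gain_c hpc
  have h3 : a = c → a ≠ p := fun h1 h2 => rot_c_ne_p hpc (h1 ▸ h2)
  have h4 : a = c → T.Anc a c := fun h => h ▸ anc_refl T c
  tauto

end Helpers

set_option maxHeartbeats 1000000 in
theorem master (hrot : IsRotationAt G T T' p c) (v a : V) :
    T'.Anc a v ↔
      ((T.Anc a v ∧ ¬(a = p ∧ Lose G T p c v)) ∨ (a = c ∧ Gain T p c v)) := by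
  obtain ⟨hpc, hsupp, hpc', hpp', hch, hoth⟩ := hrot
  have hcp : c ≠ p := rot_c_ne_p hpc
  have hpc2 : p ≠ c := Ne.symm hcp
  have hancpc : T.Anc p c := rot_anc_p_c hpc
  have hnacp : ¬ T.Anc c p := rot_not_anc_c_p hpc
  set μ : V → ℕ := fun v =>
    if v = c then 3 * T.depth p + 1 else if v = p then 3 * T.depth p + 2
    else 3 * T.depth v with hμ
  suffices H : ∀ n v, μ v ≤ n → ∀ a, (T'.Anc a v ↔
      ((T.Anc a v ∧ ¬(a = p ∧ Lose G T p c v)) ∨ (a = c ∧ Gain T p c v))) by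
    exact H (μ v) v le_rfl a
  clear a v
  intro n
  induction n with
  | zero =>
      intro v hv
      exfalso
      have h1 := depth_pos T v
      have h2 := depth_pos T p
      simp only [hμ] at hv
      split_ifs at hv <;> omega
  | succ n ih =>
      intro v hv a
      by_cases hvc : v = c
      · -- case v = c
        rw [hvc] at hv ⊢
        rw [anc_iff_head (T := T'), hpc', F_c_iff hpc]
        cases hq : T.parent p with
        | none =>
            have hap : T.Anc a p ↔ a = p := by
              rw [anc_iff_head (v := p)]; simp [hq]
            rw [anc_c_iff hpc, hap]
            constructor
            · rintro (hac | ⟨w, hw, _⟩)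
              · exact ⟨Or.inl hac, fun h => hcp (hac.symm.trans h)⟩
              · exact nomatch hw
            · rintro ⟨(hac | hap2), hne⟩
              · exact Or.inl hac
              · exact absurd hap2 hne
        | some q =>
            have hqp : T.StrictAnc q p := strictAnc_of_parent hq
            have hqc : q ≠ c := fun h => hnacp (h ▸ hqp.2)
            have hqp' : q ≠ p := hqp.1
            have hμq : μ q ≤ n := by
              have := depth_strict hqp
              simp [hμ, hqc, hqp'] at hv ⊢
              omega
            have IHq := ih q hμq a
            have hFq : ((T.Anc a q ∧ ¬(a = p ∧ Lose G T p c q)) ∨ (a = c ∧ Gain T p c q))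
                ↔ T.Anc a q := by
              have h1 : ¬ Lose G T p c q := fun h => hnacp (Anc.trans hqp.2 h.1)
              have h2 : ¬ Gain T p c q := fun h => not_anc_of_parent hq h.1
              tauto
            have e2 : (∃ w, some q = some w ∧ T'.Anc a w) ↔ T'.Anc a q := by simp
            rw [e2, IHq, hFq, anc_c_iff hpc, anc_iff_head (v := p) (a := a), hq]
            have e4 : T.Anc a q → a ≠ p := fun h he => not_anc_of_parent hq (he ▸ h)
            have e5 : a = c → a ≠ p := fun h1 h2 => hcp (h1.symm.trans h2)
            have e6 : (∃ w, some q = some w ∧ T.Anc a w) ↔ T.Anc a q := by simp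
            rw [e6]
            tauto
      · by_cases hvp : v = p
        · -- case v = p
          rw [hvp] at hv ⊢
          rw [anc_iff_head (T := T'), hpp', F_p_iff hpc]
          have hμc : μ c ≤ n := by
            simp [hμ, hpc2] at hv ⊢
            omega
          have IHc := ih c hμc a
          rw [F_c_iff hpc] at IHc
          have e2 : (∃ w, some c = some w ∧ T'.Anc a w) ↔ T'.Anc a c := by simp
          rw [e2, IHc, anc_c_iff hpc]
          have e7 : a = p → T.Anc a p := fun h => h ▸ anc_refl T p
          have e8 : a = c → a ≠ p := fun h1 h2 => hcp (h1.symm.trans h2)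
          tauto
        · -- v ∉ {c, p}
          cases hpv : T.parent v with
          | none =>
              have hov : T'.parent v = T.parent v :=
                hoth v hvc hvp (by rw [hpv]; exact fun h => nomatch h)
              have h1 : ∀ b, T.Anc b v ↔ b = v := by
                intro b; rw [anc_iff_head]; simp [hpv]
              have hnl : ¬ Lose G T p c v := fun h => hvc ((h1 c).1 h.1).symm
              have hng : ¬ Gain T p c v := fun h => hvp ((h1 p).1 h.1).symm
              rw [anc_iff_head (T := T'), hov, hpv, h1 a]
              have e2 : ¬ ∃ w, (none : Option V) = some w ∧ T'.Anc a w := by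
                rintro ⟨w, hw, _⟩; exact nomatch hw
              tauto
          | some w =>
              by_cases hwc : w = c
              · -- v is a child of c, v ≠ p
                rw [hwc] at hpv
                have hscv : T.StrictAnc c v := strictAnc_of_parent hpv
                have hd1 : T.depth c < T.depth v := depth_strict hscv
                have hd2 : T.depth p < T.depth c := depth_strict (strictAnc_of_parent hpc)
                have hμv : 3 * T.depth v ≤ n + 1 := by
                  simp only [hμ, if_neg hvc, if_neg hvp] at hv; exact hv
                have hμp : μ p ≤ n := by
                  simp [hμ, hpc2]
                  omega
                have hμc : μ c ≤ n := by
                  simp [hμ]; omega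
                by_cases hW : ∃ u ∈ T.descSet v, G.Adj u p
                · have hmvd : T'.parent v = some p := ((hch v hvp hpv).1) hW
                  rw [anc_iff_head (T := T'), hmvd]
                  have e2 : (∃ w, some p = some w ∧ T'.Anc a w) ↔ T'.Anc a p := by simp
                  rw [e2, ih p hμp a, F_p_iff hpc]
                  have hnl : ¬ Lose G T p c v :=
                    fun h => h.2 ⟨v, ⟨hvp, hpv, hW⟩, anc_refl T v⟩
                  have hng : ¬ Gain T p c v := fun h => h.2 (anc_of_parent hpv)
                  have hAv : T.Anc a v ↔ a = v ∨ T.Anc a c := by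
                    rw [anc_iff_head (a := a) (v := v)]; simp [hpv]
                  rw [hAv, anc_c_iff hpc]
                  constructor
                  · rintro (h | h | h)
                    · exact Or.inl ⟨Or.inl h, fun hb => hnl hb.2⟩
                    · exact Or.inl ⟨Or.inr (Or.inr h), fun hb => hnl hb.2⟩
                    · exact Or.inl ⟨Or.inr (Or.inl h), fun hb => hnl hb.2⟩
                  · rintro (⟨h1, _⟩ | ⟨_, h2⟩)
                    · rcases h1 with h | h | h
                      · exact Or.inl h
                      · exact Or.inr (Or.inr h)
                      · exact Or.inr (Or.inl h)
                    · exact absurd h2 hng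
                · have hstay : T'.parent v = some c := ((hch v hvp hpv).2) hW
                  rw [anc_iff_head (T := T'), hstay]
                  have e2 : (∃ w, some c = some w ∧ T'.Anc a w) ↔ T'.Anc a c := by simp
                  have IHc := ih c hμc a
                  rw [F_c_iff hpc] at IHc
                  rw [e2, IHc]
                  have hl : Lose G T p c v := by
                    refine ⟨anc_of_parent hpv, ?_⟩
                    rintro ⟨x, ⟨hxp, hxc, hxW⟩, hxv⟩
                    have hxveq : x = v := child_unique_on_chain hxc hpv hxv (anc_refl T v)
                    exact hW (hxveq ▸ hxW)
                  have hng : ¬ Gain T p c v := fun h => h.2 (anc_of_parent hpv)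
                  have hAv : T.Anc a v ↔ a = v ∨ T.Anc a c := by
                    rw [anc_iff_head (a := a) (v := v)]; simp [hpv]
                  have e5 : a = v → a ≠ p := fun h1 h2 => hvp (h1.symm.trans h2)
                  rw [hAv]
                  constructor
                  · rintro (h | ⟨h1, h2⟩)
                    · exact Or.inl ⟨Or.inl h, fun hb => e5 h hb.1⟩
                    · exact Or.inl ⟨Or.inr h1, fun hb => h2 hb.1⟩
                  · rintro (⟨h1, h2⟩ | ⟨_, h3⟩)
                    · rcases h1 with h | h
                      · exact Or.inl h
                      · exact Or.inr ⟨h, fun hap => h2 ⟨hap, hl⟩⟩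
                    · exact absurd h3 hng
              · by_cases hwp : w = p
                · -- v is a child of p, v ≠ c
                  rw [hwp] at hpv
                  have hov : T'.parent v = T.parent v := by
                    refine hoth v hvc hvp ?_
                    rw [hpv]
                    exact fun h => hcp (Option.some.inj h).symm
                  have hd1 : T.depth p < T.depth v := depth_strict (strictAnc_of_parent hpv)
                  have hμp : μ p ≤ n := by
                    simp only [hμ, if_neg hvc, if_neg hvp] at hv
                    simp [hμ, hpc2]
                    omega
                  rw [anc_iff_head (T := T'), hov, hpv]
                  have e2 : (∃ w', some p = some w' ∧ T'.Anc a w') ↔ T'.Anc a p := by simp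
                  rw [e2, ih p hμp a, F_p_iff hpc]
                  have hncv : ¬ T.Anc c v := by
                    intro h
                    rcases anc_cases h with h | ⟨w', hw', h⟩
                    · exact hvc h.symm
                    · rw [hpv] at hw'; cases Option.some.inj hw'
                      exact hnacp h
                  have hg : Gain T p c v := ⟨anc_of_parent hpv, hncv⟩
                  have hnl : ¬ Lose G T p c v := fun h => hncv h.1
                  have hAv : T.Anc a v ↔ a = v ∨ T.Anc a p := by
                    rw [anc_iff_head (a := a) (v := v)]; simp [hpv]
                  rw [hAv]
                  constructor
                  · rintro (h | h | h)
                    · exact Or.inl ⟨Or.inl h, fun hb => hnl hb.2⟩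
                    · exact Or.inl ⟨Or.inr h, fun hb => hnl hb.2⟩
                    · exact Or.inr ⟨h, hg⟩
                  · rintro (⟨h1, _⟩ | ⟨h1, _⟩)
                    · rcases h1 with h | h
                      · exact Or.inl h
                      · exact Or.inr (Or.inl h)
                    · exact Or.inr (Or.inr h1)
                · -- generic vertex
                  have hov : T'.parent v = T.parent v := by
                    refine hoth v hvc hvp ?_
                    rw [hpv]
                    exact fun h => hwc (Option.some.inj h)
                  have hd1 : T.depth w < T.depth v := depth_strict (strictAnc_of_parent hpv)
                  have hμw : μ w ≤ n := by
                    simp only [hμ, if_neg hvc, if_neg hvp] at hv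
                    simp only [hμ, if_neg hwc, if_neg hwp]
                    omega
                  rw [anc_iff_head (T := T'), hov, hpv]
                  have e2 : (∃ w', some w = some w' ∧ T'.Anc a w') ↔ T'.Anc a w := by simp
                  rw [e2, ih w hμw a]
                  have hAv : ∀ b, T.Anc b v ↔ b = v ∨ T.Anc b w := by
                    intro b; rw [anc_iff_head (a := b) (v := v)]; simp [hpv]
                  have hcv2 : T.Anc c v ↔ T.Anc c w := by
                    have hne : ¬ (c = v) := fun h => hvc h.symm
                    rw [hAv c]
                    simp [hne]
                  have hpv2 : T.Anc p v ↔ T.Anc p w := by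
                    have hne : ¬ (p = v) := fun h => hvp h.symm
                    rw [hAv p]
                    simp [hne]
                  have hmvx : (∃ x, Mv G T p c x ∧ T.Anc x v) ↔
                      (∃ x, Mv G T p c x ∧ T.Anc x w) := by
                    constructor
                    · rintro ⟨x, hx, hxv⟩
                      refine ⟨x, hx, ?_⟩
                      rcases (hAv x).1 hxv with rfl | h
                      · exact absurd hx.2.1
                          (by rw [hpv]; exact fun h => hwc (Option.some.inj h))
                      · exact h
                    · rintro ⟨x, hx, hxw⟩
                      exact ⟨x, hx, (hAv x).2 (Or.inr hxw)⟩
                  have hLose : Lose G T p c v ↔ Lose G T p c w := by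
                    unfold Lose; rw [hcv2, hmvx]
                  have hGain : Gain T p c v ↔ Gain T p c w := by
                    unfold Gain; rw [hcv2, hpv2]
                  rw [hLose, hGain, hAv a]
                  have e5 : a = v → a ≠ p := fun h1 h2 => hvp (h1.symm.trans h2)
                  constructor
                  · rintro (h | ⟨h1, h2⟩ | h)
                    · exact Or.inl ⟨Or.inl h, fun hb => e5 h hb.1⟩
                    · exact Or.inl ⟨Or.inr h1, h2⟩
                    · exact Or.inr h
                  · rintro (⟨h1, h2⟩ | h)
                    · rcases h1 with h | h
                      · exact Or.inl h
                      · exact Or.inr (Or.inl ⟨h, h2⟩)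
                    · exact Or.inr (Or.inr h)


open RTree

variable {V : Type} [Fintype V] [DecidableEq V] {G : SimpleGraph V} {T T' : RTree V}
  {p c a u v w : V}

theorem ReachIn.symm {s : Set V} (h : ReachIn G s u v) : ReachIn G s v u := by
  induction h with
  | refl => exact Relation.ReflTransGen.refl
  | tail _ hstep ih =>
      exact Relation.ReflTransGen.head ⟨hstep.1.symm, hstep.2.2, hstep.2.1⟩ ih

/-- In a search tree, every subtree hanging from `w` contains a vertex adjacent to `w`. -/
theorem exists_edge_to_parent (hT : IsSTG G T) (hyw : T.parent v = some w) :
    ∃ a ∈ T.descSet v, G.Adj a w := by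
  have hvw : T.Anc w v := anc_of_parent hyw
  have hwdesc : w ∉ T.descSet v := fun h => not_anc_of_parent hyw h
  obtain ⟨ω, hω⟩ := reachIn_walk (stg_reachIn hT (show v ∈ T.descSet w from hvw)
    (anc_refl T w)) hvw
  obtain ⟨d, e, hde, hd, he, hds, hes⟩ :=
    exists_boundary (t := T.descSet v) ω (anc_refl T v) hwdesc
  rcases stg_comp hT hde with h | h
  · exact absurd (Anc.trans h hd) he
  · -- h : T.Anc e d
    have hed : T.Anc e v ∨ T.Anc v e := anc_total h hd
    rcases hed with h2 | h2
    · rcases anc_cases h2 with h3 | ⟨w', hw', h3⟩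
      · exact absurd (h3 ▸ anc_refl T e) he
      · rw [hyw] at hw'; cases Option.some.inj hw'
        have hew : e = w := anc_antisymm h3 (hω e hes)
        exact ⟨d, hd, hew ▸ hde⟩
    · exact absurd h2 he

/-- A rotation of a search tree yields a search tree. -/
theorem rot_preserves_stg (hT : IsSTG G T) (hrot : IsRotationAt G T T' p c) :
    IsSTG G T' := by
  have hpc := hrot.1
  have hcp : c ≠ p := rot_c_ne_p hpc
  have hancpc : T.Anc p c := rot_anc_p_c hpc
  have hnacp : ¬ T.Anc c p := rot_not_anc_c_p hpc
  have hM := master hrot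
  refine ⟨hrot.2.1.trans (stg_supp hT), ?_, ?_⟩
  · -- descendant sets remain connected
    intro v _
    rw [restrictG_univ]
    have hTd : ∀ z : V, (G.induce (T.descSet z)).Connected := by
      intro z
      have := hT.2.1 z (Finset.mem_univ z)
      rwa [restrictG_univ] at this
    by_cases hvc : v = c
    · have hset : T'.descSet v = T.descSet p := by
        ext u
        have := hM u v
        simp only [RTree.descSet, Set.mem_setOf_eq]
        rw [hvc] at this ⊢
        rw [this]
        constructor
        · rintro (⟨h, _⟩ | ⟨_, hg, _⟩)
          · exact Anc.trans h hancpc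
          · exact hg
        · intro h
          by_cases hcu : T.Anc c u
          · exact Or.inl ⟨hcu, fun hb => hcp hb.1⟩
          · exact Or.inr ⟨rfl, h, hcu⟩
      rw [hset]; exact hTd p
    · by_cases hvp : v = p
      · -- the interesting case: the new subtree of p
        have hset : T'.descSet v = {u | T.Anc p u ∧ ¬ Lose G T p c u} := by
          ext u
          have := hM u v
          simp only [RTree.descSet, Set.mem_setOf_eq]
          rw [hvp] at this ⊢
          rw [this]
          constructor
          · rintro (⟨h1, h2⟩ | ⟨h1, _⟩)
            · exact ⟨h1, fun hl => h2 ⟨rfl, hl⟩⟩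
            · exact absurd h1.symm hcp
          · rintro ⟨h1, h2⟩
            exact Or.inl ⟨h1, fun hb => h2 hb.2⟩
        rw [hset]
        set S : Set V := {u | T.Anc p u ∧ ¬ Lose G T p c u} with hS
        have hpS : p ∈ S := ⟨anc_refl T p, fun h => hnacp h.1⟩
        have key : ∀ u ∈ S, ReachIn G S u p := by
          intro u hu
          rcases eq_or_ne u p with rfl | hup
          · exact Relation.ReflTransGen.refl
          · obtain ⟨y, hy1, _, hy3⟩ := exists_child_anc hu.1 (Ne.symm hup)
            by_cases hyc : y = c
            · -- u sits below c; must be below a moved child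
              rw [hyc] at hy3
              have hmv : ∃ x, Mv G T p c x ∧ T.Anc x u := by
                by_contra hno
                exact hu.2 ⟨hy3, hno⟩
              obtain ⟨x, hx, hxu⟩ := hmv
              obtain ⟨b, hb1, hb2⟩ := hx.2.2
              have hsub : T.descSet x ⊆ S := by
                intro z hz
                refine ⟨Anc.trans (Anc.trans hz (anc_of_parent hx.2.1)) hancpc, ?_⟩
                rintro ⟨_, hno⟩
                exact hno ⟨x, hx, hz⟩
              have h1 : ReachIn G S u b :=
                (stg_reachIn hT (show u ∈ T.descSet x from hxu) hb1).mono hsub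
              exact h1.trans (Relation.ReflTransGen.single ⟨hb2, hsub hb1, hpS⟩)
            · -- u sits below another child y of p
              have hsub : T.descSet y ⊆ S := by
                intro z hz
                refine ⟨Anc.trans hz (anc_of_parent hy1), ?_⟩
                rintro ⟨hcz, _⟩
                -- T.Anc c z with z below y, y ≠ c : impossible
                rcases anc_total hcz hz with h | h
                · -- c anc of y : c on chain y, p, ... impossible
                  rcases anc_cases h with h2 | ⟨w', hw', h2⟩
                  · exact hyc h2.symm
                  · rw [hy1] at hw'; cases Option.some.inj hw'
                    exact hnacp h2
                · -- y anc of c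
                  rcases anc_cases h with h2 | ⟨w', hw', h2⟩
                  · exact hyc h2
                  · rw [hpc] at hw'; cases Option.some.inj hw'
                    have hyp2 : y = p := anc_antisymm h2 (anc_of_parent hy1)
                    exact T.not_loops p ⟨p, hyp2 ▸ hy1, anc_refl T p⟩
              obtain ⟨b, hb1, hb2⟩ := exists_edge_to_parent hT hy1
              have h1 : ReachIn G S u b :=
                (stg_reachIn hT (show u ∈ T.descSet y from hy3) hb1).mono hsub
              exact h1.trans (Relation.ReflTransGen.single ⟨hb2, hsub hb1, hpS⟩)
        rw [connected_induce_iff']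
        exact ⟨⟨p, hpS⟩, fun u1 h1 u2 h2 => (key u1 h1).trans (key u2 h2).symm⟩
      · have hset : T'.descSet v = T.descSet v := by
          ext u
          have := hM u v
          simp only [RTree.descSet, Set.mem_setOf_eq]
          rw [this]
          constructor
          · rintro (⟨h, _⟩ | ⟨h, _⟩)
            · exact h
            · exact absurd h hvc
          · intro h
            exact Or.inl ⟨h, fun hb => hvp hb.1⟩
        rw [hset]; exact hTd v
  · -- comparability
    have key : ∀ u v, G.Adj u v → T.Anc u v → T'.Anc u v ∨ T'.Anc v u := by
      intro u v hadj hanc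
      by_cases hup : u = p ∧ Lose G T p c v
      · obtain ⟨hup1, hL⟩ := hup
        rcases eq_or_ne v c with hvc | hvc
        · exact Or.inr ((hM u v).2 (Or.inr ⟨hvc, by rw [hup1]; exact gain_p hpc⟩))
        · exfalso
          obtain ⟨x0, hx1, _, hx3⟩ := exists_child_anc hL.1 (Ne.symm hvc)
          have hx0p : x0 ≠ p := by
            rintro rfl
            exact hnacp (anc_of_parent hx1)
          have hadj' : G.Adj v p := by rw [← hup1]; exact hadj.symm
          exact hL.2 ⟨x0, ⟨hx0p, hx1, v, hx3, hadj'⟩, hx3⟩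
      · exact Or.inl ((hM v u).2 (Or.inl ⟨hanc, hup⟩))
    intro u v _ _ hadj
    rcases stg_comp hT hadj with h | h
    · exact key u v hadj h
    · exact (key v u hadj.symm h).symm


open RTree

variable {V : Type} [Fintype V] [DecidableEq V] {G : SimpleGraph V} {T T' P Q : RTree V}
  {U : Finset V} {p c u v w z : V}

/-- Generic tool: comparing parents of two projections. -/
theorem proj_parent_eq (hP : IsProjOn T U P) (hQ : IsProjOn T' U Q) {u u' : V}
    (h1 : ∀ w, P.parent u = some w →
      (u' ∈ U ∧ w ∈ U ∧ T'.StrictAnc w u' ∧ ∀ z ∈ U, T'.StrictAnc z u' → T'.Anc z w))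
    (h2 : ∀ w, Q.parent u' = some w → ∃ z ∈ U, T.StrictAnc z u)
    (hu : u ∈ U) :
    Q.parent u' = P.parent u := by
  cases hp : P.parent u with
  | some w => exact (hQ.2 u' w).2 (h1 w hp)
  | none =>
      cases hq : Q.parent u' with
      | none => rfl
      | some w =>
          obtain ⟨z, hz, hzu⟩ := h2 w hq
          obtain ⟨w0, hw1, hw2, hw3⟩ := nearest_spec hz hzu
          have := (hP.2 u w0).2 ⟨hu, hw1, hw2, hw3⟩
          rw [hp] at this; exact nomatch this

section Unchanged

theorem not_lose_of_mem (hG : G.IsTree) (hT : IsSTG G T) (hpc : T.parent c = some p)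
    (hU : (G.induce (↑U : Set V)).Connected)
    (hpU : p ∈ U) (hcU : c ∉ U) (hwU : w ∈ U) : ¬ Lose G T p c w := by
  have hancpc : T.Anc p c := rot_anc_p_c hpc
  have hnacp : ¬ T.Anc c p := rot_not_anc_c_p hpc
  rintro ⟨hcw, hno⟩
  have hwc : w ≠ c := fun h => hcU (h ▸ hwU)
  obtain ⟨x0, hx1, _, hx3⟩ := exists_child_anc hcw (Ne.symm hwc)
  have hx0p : x0 ≠ p := fun h => hnacp (h ▸ anc_of_parent hx1)
  have hnoW : ¬ ∃ u ∈ T.descSet x0, G.Adj u p := fun hW => hno ⟨x0, ⟨hx0p, hx1, hW⟩, hx3⟩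
  have hanc_pw : T.Anc p w := Anc.trans hcw hancpc
  have hr1 : ReachIn G ↑U w p := (connected_induce_iff'.1 hU).2 w hwU p hpU
  have hr2 : ReachIn G (T.descSet p) w p := stg_reachIn hT hanc_pw (anc_refl T p)
  obtain ⟨ω, hωp, hωU, hωd⟩ := exists_common_walk hG.2 hr1 hr2 hwU hanc_pw
  have hpx0 : p ∉ T.descSet x0 :=
    fun h => hx0p (anc_antisymm h (Anc.trans (anc_of_parent hx1) hancpc))
  obtain ⟨d, e, hde, hd, he, hds, hes⟩ :=
    exists_boundary (t := T.descSet x0) ω (show w ∈ T.descSet x0 from hx3) hpx0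
  rcases stg_comp hT hde with h | h
  · exact he (Anc.trans h hd)
  · rcases anc_total h hd with h2 | h2
    · -- h2 : T.Anc e x0
      have heU := hωU e hes
      have heC : e ≠ c := fun hh => hcU (hh ▸ heU)
      rcases anc_cases h2 with h3 | ⟨w', hw', h3⟩
      · exact he (h3 ▸ anc_refl T e)
      · rw [hx1] at hw'; cases Option.some.inj hw'
        -- h3 : T.Anc e c
        rcases anc_cases h3 with h4 | ⟨w'', hw'', h4⟩
        · exact heC h4
        · rw [hpc] at hw''; cases Option.some.inj hw''
          -- h4 : T.Anc e p ; also p anc of e since e in desc p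
          have hep : e = p := anc_antisymm h4 (hωd e hes)
          exact hnoW ⟨d, hd, hep ▸ hde⟩
    · exact he h2

theorem not_gain_of_mem (hG : G.IsTree) (hT : IsSTG G T) (hpc : T.parent c = some p)
    (hU : (G.induce (↑U : Set V)).Connected)
    (hcU : c ∈ U) (hpU : p ∉ U) (hwU : w ∈ U) : ¬ Gain T p c w := by
  have hancpc : T.Anc p c := rot_anc_p_c hpc
  rintro ⟨hpw, hncw⟩
  have hwp : w ≠ p := fun h => hpU (h ▸ hwU)
  obtain ⟨y, hy1, _, hy3⟩ := exists_child_anc hpw (Ne.symm hwp)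
  have hyc : y ≠ c := by rintro rfl; exact hncw hy3
  have hr1 : ReachIn G ↑U w c := (connected_induce_iff'.1 hU).2 w hwU c hcU
  have hr2 : ReachIn G (T.descSet p) w c := stg_reachIn hT hpw hancpc
  obtain ⟨ω, hωp, hωU, hωd⟩ := exists_common_walk hG.2 hr1 hr2 hwU hpw
  have hcy : c ∉ T.descSet y := by
    intro h
    rcases anc_cases (show T.Anc y c from h) with h2 | ⟨w', hw', h2⟩
    · exact hyc h2
    · rw [hpc] at hw'; cases Option.some.inj hw'
      have hyp : y = p := anc_antisymm h2 (anc_of_parent hy1)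
      exact T.not_loops p ⟨p, hyp ▸ hy1, anc_refl T p⟩
  obtain ⟨d, e, hde, hd, he, hds, hes⟩ :=
    exists_boundary (t := T.descSet y) ω (show w ∈ T.descSet y from hy3) hcy
  rcases stg_comp hT hde with h | h
  · exact he (Anc.trans h hd)
  · rcases anc_total h hd with h2 | h2
    · rcases anc_cases h2 with h3 | ⟨w', hw', h3⟩
      · exact he (h3 ▸ anc_refl T e)
      · rw [hy1] at hw'; cases Option.some.inj hw'
        have hep : e = p := anc_antisymm h3 (hωd e hes)
        exact hpU (hep ▸ hωU e hes)
    · exact he h2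

theorem anc_unchanged (hG : G.IsTree) (hT : IsSTG G T) (hrot : IsRotationAt G T T' p c)
    (hU : (G.induce (↑U : Set V)).Connected) (hnot : ¬(p ∈ U ∧ c ∈ U)) :
    ∀ z ∈ U, ∀ w ∈ U, (T'.Anc z w ↔ T.Anc z w) := by
  have hpc := hrot.1
  have hM := master hrot
  intro z hz w hw
  rw [hM w z]
  by_cases hcU : c ∈ U
  · have hpU : p ∉ U := fun h => hnot ⟨h, hcU⟩
    have hzp : z ≠ p := fun h => hpU (h ▸ hz)
    have hng := not_gain_of_mem hG hT hpc hU hcU hpU hw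
    constructor
    · rintro (⟨h, _⟩ | ⟨_, hg⟩)
      · exact h
      · exact absurd hg hng
    · intro h; exact Or.inl ⟨h, fun hb => hzp hb.1⟩
  · have hzc : z ≠ c := fun h => hcU (h ▸ hz)
    by_cases hpU : p ∈ U
    · have hnl := not_lose_of_mem hG hT hpc hU hpU hcU hw
      constructor
      · rintro (⟨h, _⟩ | ⟨hzc2, _⟩)
        · exact h
        · exact absurd hzc2 hzc
      · intro h; exact Or.inl ⟨h, fun hb => hnl hb.2⟩
    · have hzp : z ≠ p := fun h => hpU (h ▸ hz)
      constructor
      · rintro (⟨h, _⟩ | ⟨hzc2, _⟩)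
        · exact h
        · exact absurd hzc2 hzc
      · intro h; exact Or.inl ⟨h, fun hb => hzp hb.1⟩

theorem proj_unchanged (hP : IsProjOn T U P) (hsupp : T'.supp = T.supp)
    (hiff : ∀ z ∈ U, ∀ w ∈ U, (T'.Anc z w ↔ T.Anc z w)) : IsProjOn T' U P := by
  refine ⟨hP.1.trans (by rw [hsupp]), ?_⟩
  intro u w
  rw [hP.2 u w]
  constructor
  · rintro ⟨h1, h2, ⟨h3, h4⟩, h5⟩
    refine ⟨h1, h2, ⟨h3, (hiff w h2 u h1).2 h4⟩, ?_⟩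
    intro z hz hzs
    exact (hiff z hz w h2).2 (h5 z hz ⟨hzs.1, (hiff z hz u h1).1 hzs.2⟩)
  · rintro ⟨h1, h2, ⟨h3, h4⟩, h5⟩
    refine ⟨h1, h2, ⟨h3, (hiff w h2 u h1).1 h4⟩, ?_⟩
    intro z hz hzs
    exact (hiff z hz w h2).1 (h5 z hz ⟨hzs.1, (hiff z hz u h1).2 hzs.2⟩)

end Unchanged


open RTree

variable {V : Type} [Fintype V] [DecidableEq V] {G : SimpleGraph V} {T T' P Q : RTree V}
  {U : Finset V} {p c u v w z : V}

theorem proj_rotation (hG : G.IsTree) (hT : IsSTG G T) (hrot : IsRotationAt G T T' p c)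
    (hU : (G.induce (↑U : Set V)).Connected) (hpU : p ∈ U) (hcU : c ∈ U)
    (hP : IsProjOn T U P) (hQ : IsProjOn T' U Q) :
    IsRotationAt (restrictG G ↑U) P Q p c := by
  have hpc := hrot.1
  have hcp : c ≠ p := rot_c_ne_p hpc
  have hancpc : T.Anc p c := rot_anc_p_c hpc
  have hnacp : ¬ T.Anc c p := rot_not_anc_c_p hpc
  have hM := master hrot
  -- characterization of T'-ancestors of c
  have hSAc : ∀ z, T'.Anc z c ↔ (T.Anc z c ∧ z ≠ p) := by
    intro z
    rw [hM c z]
    constructor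
    · rintro (⟨h1, h2⟩ | ⟨_, hg⟩)
      · exact ⟨h1, fun hzp => h2 ⟨hzp, lose_c (G := G) hpc⟩⟩
      · exact absurd hg (not_gain_c hpc)
    · rintro ⟨h1, h2⟩
      exact Or.inl ⟨h1, fun hb => h2 hb.1⟩
  have hT_to' : ∀ z v, T.Anc z v → z ≠ p → T'.Anc z v :=
    fun z v h hzp => (hM v z).2 (Or.inl ⟨h, fun hb => hzp hb.1⟩)
  -- clause 1
  have hPc : P.parent c = some p :=
    (hP.2 c p).2 ⟨hcU, hpU, strictAnc_of_parent hpc,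
      fun z hz hzs => ((anc_c_iff hpc).1 hzs.2).resolve_left hzs.1⟩
  -- clause 2
  have hQsupp : Q.supp = P.supp := by
    rw [hQ.1, hP.1, hrot.2.1]
  -- clause 3
  have hQc : Q.parent c = P.parent p := by
    refine proj_parent_eq hP hQ ?_ ?_ hpU
    · intro w hw
      obtain ⟨_, hwU, hws, hnear⟩ := (hP.2 p w).1 hw
      have hwc : w ≠ c := fun h => hnacp (h ▸ hws.2)
      refine ⟨hcU, hwU, ⟨hwc, (hSAc w).2 ⟨(anc_c_iff hpc).2 (Or.inr hws.2), hws.1⟩⟩, ?_⟩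
      intro z hz hzs
      have h' := (hSAc z).1 hzs.2
      have hzp : T.Anc z p := ((anc_c_iff hpc).1 h'.1).resolve_left hzs.1
      exact hT_to' z w (hnear z hz ⟨h'.2, hzp⟩) h'.2
    · intro w hw
      obtain ⟨_, hwU, hws, _⟩ := (hQ.2 c w).1 hw
      have h' := (hSAc w).1 hws.2
      exact ⟨w, hwU, h'.2, ((anc_c_iff hpc).1 h'.1).resolve_left hws.1⟩
  -- clause 4
  have hQp : Q.parent p = some c := by
    refine (hQ.2 p c).2 ⟨hpU, hcU, ⟨hcp, (hM p c).2 (Or.inr ⟨rfl, gain_p hpc⟩)⟩, ?_⟩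
    intro z hz hzs
    rcases (hM p z).1 hzs.2 with ⟨h1, _⟩ | ⟨hzc, _⟩
    · exact (hM c z).2 (Or.inl ⟨(anc_c_iff hpc).2 (Or.inr h1), fun hb => hzs.1 hb.1⟩)
    · rw [hzc]; exact anc_refl T' c
  refine ⟨hPc, hQsupp, hQc, hQp, ?_, ?_⟩
  · -- clause 5 : children of c
    intro x hxp hPx
    obtain ⟨hxU, hcU2, ⟨hcx_ne, hcx⟩, hnear⟩ := (hP.2 x c).1 hPx
    obtain ⟨x0, hx01, _, hx03⟩ := exists_child_anc hcx hcx_ne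
    have hx0p : x0 ≠ p := fun h => hnacp (h ▸ anc_of_parent hx01)
    have hdescP : P.descSet x = {v | v ∈ U ∧ T.Anc x v} := proj_descSet hT hP hxU
    have hSW : (∃ u ∈ P.descSet x, (restrictG G ↑U).Adj u p) ↔
        (∃ u, u ∈ U ∧ T.Anc x u ∧ G.Adj u p) := by
      constructor
      · rintro ⟨u, hu, hadj⟩
        rw [hdescP] at hu
        exact ⟨u, hu.1, hu.2, hadj.1⟩
      · rintro ⟨u, h1, h2, h3⟩
        exact ⟨u, by rw [hdescP]; exact ⟨h1, h2⟩, ⟨h3, Finset.mem_coe.2 h1, Finset.mem_coe.2 hpU⟩⟩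
    -- any U-vertex below x0 is below x
    have hUsub : ∀ u2, u2 ∈ U → T.Anc x0 u2 → T.Anc x u2 := by
      intro u2 hu2U hu2d
      by_contra hnx
      have hr1 : ReachIn G ↑U x u2 := (connected_induce_iff'.1 hU).2 x hxU u2 hu2U
      have hr2 : ReachIn G (T.descSet x0) x u2 := stg_reachIn hT hx03 hu2d
      obtain ⟨ω, hωp, hωU, hωd⟩ := exists_common_walk hG.2 hr1 hr2 hxU hx03
      obtain ⟨d, e, hde, hd, he, hds, hes⟩ :=
        exists_boundary (t := T.descSet x) ω (anc_refl T x) hnx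
      rcases stg_comp hT hde with h | h
      · exact he (Anc.trans h hd)
      · rcases anc_total h hd with h2 | h2
        · have heU := hωU e hes
          have hex : e ≠ x := fun hh => he (hh ▸ anc_refl T e)
          have h3 : T.Anc e c := hnear e heU ⟨hex, h2⟩
          have h4 : T.Anc c e := Anc.trans (hωd e hes) (anc_of_parent hx01)
          have h5 : e = c := anc_antisymm h3 h4
          have h6 : T.Anc x0 c := h5 ▸ hωd e hes
          have h7 : c = x0 := anc_antisymm (anc_of_parent hx01) h6
          have h8 := hx01
          rw [← h7] at h8
          exact T.not_loops c ⟨c, h8, anc_refl T c⟩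
        · exact he h2
    constructor
    · -- a witness exists : x goes below p
      intro hsw
      obtain ⟨u, huU, hxu, hup⟩ := hSW.1 hsw
      have hMv : Mv G T p c x0 := ⟨hx0p, hx01, u, Anc.trans hxu hx03, hup⟩
      refine (hQ.2 x p).2 ⟨hxU, hpU, ⟨fun h => hxp h.symm,
        (hM x p).2 (Or.inl ⟨Anc.trans hcx hancpc, fun hb => hb.2.2 ⟨x0, hMv, hx03⟩⟩)⟩, ?_⟩
      intro z hz hzs
      rcases (hM x z).1 hzs.2 with ⟨h1, _⟩ | ⟨_, hg⟩
      · have h3 : T.Anc z c := hnear z hz ⟨hzs.1, h1⟩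
        rcases (anc_c_iff hpc).1 h3 with hzc | hzp2
        · rw [hzc]; exact (hM p c).2 (Or.inr ⟨rfl, gain_p hpc⟩)
        · exact (hM p z).2 (Or.inl ⟨hzp2, fun hb => not_lose_p hpc hb.2⟩)
      · exact absurd hcx hg.2
    · -- no witness : x stays below c
      intro hnsw
      have hnoW : ¬ ∃ u ∈ T.descSet x0, G.Adj u p := by
        rintro ⟨w', hw'd, hw'adj⟩
        apply hnsw
        rw [hSW]
        -- show w' ∈ U using uniqueness of the tree path from p to x
        have hr2 : ReachIn G (T.descSet x0) x w' := stg_reachIn hT hx03 hw'd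
        obtain ⟨ω1, hω1⟩ := reachIn_walk hr2 hx03
        have hπ1sub : ∀ y ∈ ω1.toPath.val.support, y ∈ T.descSet x0 :=
          fun y hy => hω1 y (SimpleGraph.Walk.support_toPath_subset ω1 hy)
        have hpd : p ∉ T.descSet x0 :=
          fun h => hx0p (anc_antisymm h (Anc.trans (anc_of_parent hx01) hancpc))
        have hpnot : p ∉ (ω1.toPath.val.reverse).support := by
          rw [SimpleGraph.Walk.support_reverse]
          intro h
          exact hpd (hπ1sub p (List.mem_reverse.1 h))
        have hπ : (SimpleGraph.Walk.cons hw'adj.symm ω1.toPath.val.reverse).IsPath :=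
          (SimpleGraph.Walk.cons_isPath_iff _ _).2 ⟨ω1.toPath.prop.reverse, hpnot⟩
        have hr1 : ReachIn G ↑U p x := ((connected_induce_iff'.1 hU).2 x hxU p hpU).symm
        obtain ⟨ω2, hω2⟩ := reachIn_walk hr1 (Finset.mem_coe.2 hpU)
        have hequ : (⟨_, hπ⟩ : G.Path p x) = ω2.toPath := hG.2.path_unique _ _
        have hw'mem : w' ∈ (SimpleGraph.Walk.cons hw'adj.symm ω1.toPath.val.reverse).support := by
          rw [SimpleGraph.Walk.support_cons]
          exact List.mem_cons_of_mem _ (SimpleGraph.Walk.start_mem_support _)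
        have hw'mem2 : w' ∈ ω2.toPath.val.support := by
          rw [← hequ]
          exact hw'mem
        have hw'U : w' ∈ U :=
          hω2 w' (SimpleGraph.Walk.support_toPath_subset ω2 hw'mem2)
        exact ⟨w', hw'U, hUsub w' hw'U hw'd, hw'adj⟩
      refine (hQ.2 x c).2 ⟨hxU, hcU, ⟨hcx_ne,
        (hM x c).2 (Or.inl ⟨hcx, fun hb => hcp hb.1⟩)⟩, ?_⟩
      intro z hz hzs
      rcases (hM x z).1 hzs.2 with ⟨h1, hguard⟩ | ⟨_, hg⟩
      · have hLx : Lose G T p c x := by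
          refine ⟨hcx, ?_⟩
          rintro ⟨x', hx', hx'x⟩
          have hxx : x' = x0 := child_unique_on_chain hx'.2.1 hx01 hx'x hx03
          exact hnoW (hxx ▸ hx'.2.2)
        have hzp : z ≠ p := fun hzp => hguard ⟨hzp, hLx⟩
        have h3 : T.Anc z c := hnear z hz ⟨hzs.1, h1⟩
        exact (hM c z).2 (Or.inl ⟨h3, fun hb => hzp hb.1⟩)
      · exact absurd hcx hg.2
  · -- clause 6 : all other vertices
    intro x hxc hxp hPne
    by_cases hxU : x ∈ U
    · refine proj_parent_eq hP hQ ?_ ?_ hxU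
      · intro w hw
        obtain ⟨_, hwU, ⟨hwne, hwx⟩, hnear⟩ := (hP.2 x w).1 hw
        have hwc : w ≠ c := fun hwceq => hPne (by rw [← hwceq]; exact hw)
        have hLwx : Lose G T p c w → Lose G T p c x := by
          rintro ⟨hcw, hno⟩
          refine ⟨Anc.trans hwx hcw, ?_⟩
          rintro ⟨x', hx', hx'x⟩
          obtain ⟨x1, hx11, _, hx13⟩ := exists_child_anc hcw (fun h => hwc h.symm)
          have hxx : x' = x1 := child_unique_on_chain hx'.2.1 hx11 hx'x
            (Anc.trans hwx hx13)
          exact hno ⟨x', hx', hxx ▸ hx13⟩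
        refine ⟨hxU, hwU, ⟨hwne, (hM x w).2 (Or.inl ⟨hwx, ?_⟩)⟩, ?_⟩
        · rintro ⟨hwp, hLx⟩
          exact hnacp (hwp ▸ hnear c hcU ⟨Ne.symm hxc, hLx.1⟩)
        · intro z hz hzs
          rcases (hM x z).1 hzs.2 with ⟨h1z, hguard⟩ | ⟨hzc, hgx⟩
          · have hz_w : T.Anc z w := hnear z hz ⟨hzs.1, h1z⟩
            refine (hM w z).2 (Or.inl ⟨hz_w, ?_⟩)
            rintro ⟨hzp, hLw⟩
            exact hguard ⟨hzp, hLwx hLw⟩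
          · have hpw : T.Anc p w := hnear p hpU ⟨Ne.symm hxp, hgx.1⟩
            have hncw : ¬ T.Anc c w := fun h => hgx.2 (Anc.trans hwx h)
            exact (hM w z).2 (Or.inr ⟨hzc, hpw, hncw⟩)
      · intro w hw
        obtain ⟨_, hwU, ⟨hwne, hwx⟩, _⟩ := (hQ.2 x w).1 hw
        rcases (hM x w).1 hwx with ⟨h1, _⟩ | ⟨_, hg⟩
        · exact ⟨w, hwU, hwne, h1⟩
        · exact ⟨p, hpU, Ne.symm hxp, hg.1⟩
    · rw [proj_parent_none hQ hxU, proj_parent_none hP hxU]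


open RTree

variable {V : Type} [Fintype V] [DecidableEq V] {G : SimpleGraph V}

theorem main_aux (hG : G.IsTree) {K : ℕ} {U : Fin K → Finset V}
    (hdisj : ∀ i j : Fin K, i ≠ j → Disjoint (U i) (U j))
    (hconn : ∀ i : Fin K, (G.induce (↑(U i) : Set V)).Connected)
    {T2 : RTree V} {P2 : Fin K → RTree V}
    (hP2 : ∀ i, IsProjOn T2 (U i) (P2 i)) :
    ∀ (k : ℕ) (T : RTree V) (P : Fin K → RTree V), IsSTG G T →
      (∀ i, IsProjOn T (U i) (P i)) → ReachesIn G k T T2 →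
      ∃ c : Fin K → ℕ,
        (∀ i, ReachesIn (restrictG G ↑(U i)) (c i) (P i) (P2 i)) ∧ ∑ i, c i ≤ k := by
  intro k
  induction k with
  | zero =>
      intro T P hT hP hk
      have heq : T = T2 := hk
      refine ⟨fun _ => 0, fun i => ?_, by simp⟩
      have hPeq : P i = P2 i := proj_unique (hP i) (heq ▸ hP2 i)
      exact hPeq
  | succ k ih =>
      intro T P hT hP hk
      obtain ⟨T', hRot, hk'⟩ := hk
      obtain ⟨p, c, hrotat⟩ := hRot
      have hT' : IsSTG G T' := rot_preserves_stg hT hrotat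
      have hQ : ∀ i, IsProjOn T' (U i) (projRT T' (U i) hT' (hconn i)) :=
        fun i => projRT_isProjOn hT' (hconn i)
      obtain ⟨c', hc'1, hc'2⟩ := ih T' _ hT' hQ hk'
      refine ⟨fun i => if p ∈ U i ∧ c ∈ U i then c' i + 1 else c' i, ?_, ?_⟩
      · intro i
        show ReachesIn (restrictG G ↑(U i))
          (if p ∈ U i ∧ c ∈ U i then c' i + 1 else c' i) (P i) (P2 i)
        by_cases hib : p ∈ U i ∧ c ∈ U i
        · rw [if_pos hib]
          exact ⟨projRT T' (U i) hT' (hconn i),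
            ⟨p, c, proj_rotation hG hT hrotat (hconn i) hib.1 hib.2 (hP i) (hQ i)⟩,
            hc'1 i⟩
        · rw [if_neg hib]
          have hQP : projRT T' (U i) hT' (hconn i) = P i := proj_unique (hQ i)
            (proj_unchanged (hP i) hrotat.2.1 (anc_unchanged hG hT hrotat (hconn i) hib))
          rw [← hQP]
          exact hc'1 i
      · have hsplit : ∀ i : Fin K, (if p ∈ U i ∧ c ∈ U i then c' i + 1 else c' i) =
            c' i + (if p ∈ U i ∧ c ∈ U i then 1 else 0) := by
          intro i; split_ifs <;> omega
        rw [Finset.sum_congr rfl (fun i _ => hsplit i), Finset.sum_add_distrib]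
        have hone : (∑ i, if p ∈ U i ∧ c ∈ U i then (1 : ℕ) else 0) ≤ 1 := by
          by_cases hex : ∃ i0, p ∈ U i0 ∧ c ∈ U i0
          · obtain ⟨i0, hi0⟩ := hex
            have hz : ∀ i ∈ Finset.univ, i ≠ i0 →
                (if p ∈ U i ∧ c ∈ U i then (1 : ℕ) else 0) = 0 := by
              intro i _ hne
              rw [if_neg]
              rintro ⟨hp2, _⟩
              exact Finset.disjoint_left.1 (hdisj i i0 hne) hp2 hi0.1
            rw [Finset.sum_eq_single i0 hz (by simp)]
            split_ifs <;> omega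
          · have hz : ∀ i : Fin K, (if p ∈ U i ∧ c ∈ U i then (1 : ℕ) else 0) = 0 :=
              fun i => if_neg (fun hb => hex ⟨i, hb⟩)
            simp [hz]
        omega


/-- the rotation distance is at least the sum of the rotation distances
of projections onto pairwise disjoint connected vertex sets. -/
theorem rotation_distance_projection_lower {V : Type} [Fintype V] [DecidableEq V]
    (G : SimpleGraph V) (hG : G.IsTree)
    (T1 T2 : RTree V) (h1 : IsSTG G T1) (h2 : IsSTG G T2)
    (K : ℕ) (U : Fin K → Finset V)
    (hdisj : ∀ i j : Fin K, i ≠ j → Disjoint (U i) (U j))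
    (hconn : ∀ i : Fin K, (G.induce (↑(U i) : Set V)).Connected)
    (P1 P2 : Fin K → RTree V)
    (hP1 : ∀ i, IsProjOn T1 (U i) (P1 i)) (hP2 : ∀ i, IsProjOn T2 (U i) (P2 i))
    (k : ℕ) (hk : ReachesIn G k T1 T2) :
    ∃ c : Fin K → ℕ,
      (∀ i : Fin K, ReachesIn (restrictG G ↑(U i)) (c i) (P1 i) (P2 i)) ∧
      ∑ i, c i ≤ k := by
  exact main_aux hG hdisj hconn hP2 k T1 P1 h1 hP1 hk
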